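/- The action profile (α₁, α₂) = (1,0) is a pure Nash equilibrium of the channel selection game if and only if g_{1,1}^{(1)}(1 + g_{1,2}^{(2)}) ≥ g_{1,1}^{(2)} and g_{2,2}^{(2)}(1 + g_{2,1}^{(1)}) ≥ g_{2,2}^{(1)}. -/
import Mathlib


open Real Set

/-- Utility of a player with direct gains `gk1 gk2`, cross gains `gi1 gi2`,
own action `a`, opponent action `b`. -/
noncomputable def u (gk1 gk2 gi1 gi2 a b : ℝ) : ℝ :=
  Real.logb 2 (1 + a * gk1 / (1 + b * gi1)) +
  Real.logb 2 (1 + (1 - a) * gk2 / (1 + (1 - b) * gi2))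

lemma key (x y d : ℝ) (hx : 0 < x) (hy : 0 < y) (hd : 0 < d) :
    Real.logb 2 (1 + x / (1 + d)) ≤ Real.logb 2 (1 + y) ↔ x ≤ y * (1 + d) := by
  have h1 : (0:ℝ) < 1 + d := by linarith
  have h2 : (0:ℝ) < 1 + x / (1 + d) := by positivity
  have h3 : (0:ℝ) < 1 + y := by linarith
  rw [Real.logb_le_logb (by norm_num) h2 h3, add_le_add_iff_left, div_le_iff₀ h1]

/-- `(1,0)` is a pure NE of the CS game iff
`g_{1,1}^{(1)}(1+g_{1,2}^{(2)}) ≥ g_{1,1}^{(2)}` and `g_{2,2}^{(2)}(1+g_{2,1}^{(1)}) ≥ g_{2,2}^{(1)}`. -/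
theorem cs_NE_one_zero_iff
    (g111 g112 g121 g122 g211 g212 g221 g222 : ℝ)
    (h111 : 0 < g111) (h112 : 0 < g112) (h121 : 0 < g121) (h122 : 0 < g122)
    (h211 : 0 < g211) (h212 : 0 < g212) (h221 : 0 < g221) (h222 : 0 < g222) :
    ((∀ a1' ∈ ({0, 1} : Set ℝ),
        u g111 g112 g121 g122 a1' 0 ≤ u g111 g112 g121 g122 1 0) ∧
     (∀ a2' ∈ ({0, 1} : Set ℝ),
        u g221 g222 g211 g212 a2' 1 ≤ u g221 g222 g211 g212 0 1))
    ↔ (g112 ≤ g111 * (1 + g122) ∧ g221 ≤ g222 * (1 + g211)) := by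
  have e1 : u g111 g112 g121 g122 1 0 = Real.logb 2 (1 + g111) := by
    simp [u]
  have e0 : u g111 g112 g121 g122 0 0 = Real.logb 2 (1 + g112 / (1 + g122)) := by
    simp [u]
  have f0 : u g221 g222 g211 g212 0 1 = Real.logb 2 (1 + g222) := by
    simp [u]
  have f1 : u g221 g222 g211 g212 1 1 = Real.logb 2 (1 + g221 / (1 + g211)) := by
    simp [u]
  constructor
  · rintro ⟨h1, h2⟩
    constructor
    · have := h1 0 (by norm_num)
      rw [e0, e1, key _ _ _ h112 h111 h122] at this
      exact this
    · have := h2 1 (by norm_num)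
      rw [f1, f0, key _ _ _ h221 h222 h211] at this
      exact this
  · rintro ⟨h1, h2⟩
    constructor
    · rintro a (rfl | rfl)
      · rw [e0, e1, key _ _ _ h112 h111 h122]; exact h1
      · exact le_refl _
    · rintro a (rfl | rfl)
      · exact le_refl _
      · rw [f1, f0, key _ _ _ h221 h222 h211]; exact h2
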